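/- For every α > 0 there exists a constant c(α) ≥ 1 such that for all u, v ∈ ℝ^N one has (1/c(α)) |⟦v⟧^α − ⟦u⟧^α| ≤ (|u| + |v|)^{α−1} |v − u| ≤ c(α) |⟦v⟧^α − ⟦u⟧^α|. -/

import Mathlib

open Real

/-- The power `⟦w⟧^α := |w|^{α−1} w` (with `⟦0⟧^α = 0`). -/
noncomputable def vpow {N : ℕ} (α : ℝ) (w : EuclideanSpace ℝ (Fin N)) :
    EuclideanSpace ℝ (Fin N) :=
  ‖w‖ ^ (α - 1) • w

namespace PowerAlphaAux

open scoped RealInnerProductSpace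

variable {α : ℝ}

/-- The constant. -/
noncomputable def cst (α : ℝ) : ℝ := 2 * 2 ^ |α - 1| * max α α⁻¹

lemma one_le_tp : (1:ℝ) ≤ 2 ^ |α - 1| := by
  calc (1:ℝ) = 2 ^ (0:ℝ) := (Real.rpow_zero 2).symm
  _ ≤ 2 ^ |α - 1| := Real.rpow_le_rpow_of_exponent_le one_le_two (abs_nonneg _)

lemma one_le_max (hα : 0 < α) : 1 ≤ max α α⁻¹ := by
  rcases le_total α 1 with h | h
  · exact le_max_of_le_right (one_le_inv_iff₀.mpr ⟨hα, h⟩)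
  · exact le_max_of_le_left h

lemma one_le_cst (hα : 0 < α) : 1 ≤ cst α := by
  have h1 := one_le_tp (α := α)
  have h2 := one_le_max hα
  unfold cst; nlinarith

lemma cst_pos (hα : 0 < α) : 0 < cst α := lt_of_lt_of_le one_pos (one_le_cst hα)

lemma alpha_le_cst (hα : 0 < α) : α ≤ cst α := by
  have h1 := one_le_tp (α := α)
  have h2 := one_le_max hα
  have h3 : α ≤ max α α⁻¹ := le_max_left _ _
  unfold cst; nlinarith

lemma inv_alpha_le_cst (hα : 0 < α) : α⁻¹ ≤ cst α := by
  have h1 := one_le_tp (α := α)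
  have h2 := one_le_max hα
  have h3 : α⁻¹ ≤ max α α⁻¹ := le_max_right _ _
  have h4 : 0 < α⁻¹ := inv_pos.mpr hα
  unfold cst; nlinarith

lemma tp_le_cst (hα : 0 < α) : (2:ℝ) ^ |α - 1| ≤ cst α := by
  have h1 := one_le_tp (α := α)
  have h2 := one_le_max hα
  unfold cst; nlinarith

lemma two_rpow_le_cst (hα : 0 < α) : (2:ℝ) ^ α ≤ cst α := by
  have h0 : (2:ℝ) ^ α = 2 * 2 ^ (α - 1) := by
    rw [show α = (α - 1) + 1 by ring, Real.rpow_add_one (by norm_num : (2:ℝ) ≠ 0)]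
    ring_nf
  have h1 : (2:ℝ) ^ (α - 1) ≤ 2 ^ |α - 1| :=
    Real.rpow_le_rpow_of_exponent_le one_le_two (le_abs_self _)
  have h2 := one_le_max hα
  have h3 := one_le_tp (α := α)
  rw [h0]; unfold cst; nlinarith

lemma two_le_cst (hα : 0 < α) : (2:ℝ) ≤ cst α := by
  have h1 := one_le_tp (α := α)
  have h2 := one_le_max hα
  unfold cst; nlinarith

/-- `x^(α-1) * x = x^α` for `x ≥ 0`, `α > 0`. -/
lemma rpow_pred_mul (hα : 0 < α) {x : ℝ} (hx : 0 ≤ x) : x ^ (α - 1) * x = x ^ α := by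
  rcases eq_or_lt_of_le hx with h | h
  · rw [← h, Real.zero_rpow hα.ne', mul_zero]
  · have h2 := Real.rpow_add_one h.ne' (α - 1)
    rw [sub_add_cancel] at h2
    rw [h2]

/- Normalized core inequalities on `[0,1]`. -/

lemma core1 (hα1 : 1 ≤ α) {t : ℝ} (h0 : 0 ≤ t) : 1 - t ^ α ≤ α * (1 - t) := by
  have h := one_add_mul_self_le_rpow_one_add (s := t - 1) (by linarith) hα1
  rw [show (1:ℝ) + (t - 1) = t by ring] at h
  linarith

lemma core2 (hα1 : 1 ≤ α) {t : ℝ} (h0 : 0 ≤ t) (h1 : t ≤ 1) : 1 - t ≤ 1 - t ^ α := by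
  rcases eq_or_lt_of_le h0 with h | h
  · rw [← h, Real.zero_rpow (by linarith : α ≠ 0)]
  · have := Real.rpow_le_rpow_of_exponent_ge h h1 hα1
    rw [Real.rpow_one] at this
    linarith

lemma core3 (hα : 0 < α) (hα1 : α ≤ 1) {t : ℝ} (h0 : 0 ≤ t) (h1 : t ≤ 1) :
    1 - t ^ α ≤ 1 - t := by
  rcases eq_or_lt_of_le h0 with h | h
  · rw [← h, Real.zero_rpow hα.ne']
  · have := Real.rpow_le_rpow_of_exponent_ge h h1 hα1
    rw [Real.rpow_one] at this
    linarith

lemma core4 (hα : 0 < α) (hα1 : α ≤ 1) {t : ℝ} (h0 : 0 ≤ t) :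
    α * (1 - t) ≤ 1 - t ^ α := by
  have h := rpow_one_add_le_one_add_mul_self (s := t - 1) (by linarith) hα.le hα1
  rw [show (1:ℝ) + (t - 1) = t by ring] at h
  linarith

/- Scalar inequalities, assuming `0 ≤ a ≤ b`. -/

lemma scalar_diff_upper (hα : 0 < α) {a b : ℝ} (ha : 0 ≤ a) (hab : a ≤ b) :
    b ^ α - a ^ α ≤ cst α * ((a + b) ^ (α - 1) * (b - a)) := by
  have hb : 0 ≤ b := ha.trans hab
  rcases eq_or_lt_of_le hb with hb0 | hb0
  · have ha0 : a = 0 := le_antisymm (hb0 ▸ hab) ha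
    rw [ha0, ← hb0]
    simp
  · have ht0 : 0 ≤ a / b := div_nonneg ha hb0.le
    have ht1 : a / b ≤ 1 := (div_le_one hb0).mpr hab
    have haα : a ^ α = (a / b) ^ α * b ^ α := by
      rw [← Real.mul_rpow ht0 hb, div_mul_cancel₀ _ hb0.ne']
    have hbb : b ^ (α - 1) * b = b ^ α := rpow_pred_mul hα hb
    have hba : b ^ (α - 1) * (b - a) = (1 - a / b) * b ^ α := by
      rw [← hbb]
      field_simp
    have hbαn : (0:ℝ) ≤ b ^ α := Real.rpow_nonneg hb α
    have hba0 : (0:ℝ) ≤ b - a := by linarith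
    have hEn : 0 ≤ (a + b) ^ (α - 1) * (b - a) :=
      mul_nonneg (Real.rpow_nonneg (by linarith) _) hba0
    rcases le_total 1 α with h1 | h1
    · -- α ≥ 1
      have hcore := core1 h1 ht0
      have step1 : b ^ α - a ^ α ≤ α * (b ^ (α - 1) * (b - a)) := by
        rw [haα, hba]
        nlinarith [hbαn, hcore]
      have hE : b ^ (α - 1) ≤ (a + b) ^ (α - 1) :=
        Real.rpow_le_rpow hb (by linarith) (by linarith)
      calc b ^ α - a ^ α ≤ α * (b ^ (α - 1) * (b - a)) := step1
        _ ≤ α * ((a + b) ^ (α - 1) * (b - a)) :=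
            mul_le_mul_of_nonneg_left (mul_le_mul_of_nonneg_right hE hba0) hα.le
        _ ≤ cst α * ((a + b) ^ (α - 1) * (b - a)) :=
            mul_le_mul_of_nonneg_right (alpha_le_cst hα) hEn
    · -- α ≤ 1
      have hcore := core3 hα h1 ht0 ht1
      have step1 : b ^ α - a ^ α ≤ b ^ (α - 1) * (b - a) := by
        rw [haα, hba]
        nlinarith [hbαn, hcore]
      have h2b : (2 * b) ^ (α - 1) ≤ (a + b) ^ (α - 1) :=
        Real.rpow_le_rpow_of_nonpos (by linarith) (by linarith) (by linarith)
      have h2brw : (2 * b) ^ (α - 1) = 2 ^ (α - 1) * b ^ (α - 1) :=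
        Real.mul_rpow (by norm_num) hb
      have hone : (2:ℝ) ^ (1 - α) * 2 ^ (α - 1) = 1 := by
        rw [← Real.rpow_add two_pos]
        norm_num
      have habs : (2:ℝ) ^ (1 - α) = 2 ^ |α - 1| := by
        rw [abs_of_nonpos (by linarith), neg_sub]
      have htpn : (0:ℝ) ≤ 2 ^ (1 - α) := Real.rpow_nonneg (by norm_num) _
      calc b ^ α - a ^ α ≤ b ^ (α - 1) * (b - a) := step1
        _ = 2 ^ (1 - α) * ((2 ^ (α - 1) * b ^ (α - 1)) * (b - a)) := by
            rw [show (2:ℝ) ^ (1 - α) * ((2 ^ (α - 1) * b ^ (α - 1)) * (b - a))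
              = (2 ^ (1 - α) * 2 ^ (α - 1)) * (b ^ (α - 1) * (b - a)) by ring, hone, one_mul]
        _ ≤ 2 ^ (1 - α) * ((a + b) ^ (α - 1) * (b - a)) := by
            apply mul_le_mul_of_nonneg_left _ htpn
            rw [← h2brw]
            exact mul_le_mul_of_nonneg_right h2b hba0
        _ ≤ cst α * ((a + b) ^ (α - 1) * (b - a)) := by
            apply mul_le_mul_of_nonneg_right _ hEn
            rw [habs]
            exact tp_le_cst hα

lemma scalar_diff_lower (hα : 0 < α) {a b : ℝ} (ha : 0 ≤ a) (hab : a ≤ b) :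
    (a + b) ^ (α - 1) * (b - a) ≤ cst α * (b ^ α - a ^ α) := by
  have hb : 0 ≤ b := ha.trans hab
  rcases eq_or_lt_of_le hb with hb0 | hb0
  · have ha0 : a = 0 := le_antisymm (hb0 ▸ hab) ha
    rw [ha0, ← hb0]
    simp
  · have ht0 : 0 ≤ a / b := div_nonneg ha hb0.le
    have ht1 : a / b ≤ 1 := (div_le_one hb0).mpr hab
    have haα : a ^ α = (a / b) ^ α * b ^ α := by
      rw [← Real.mul_rpow ht0 hb, div_mul_cancel₀ _ hb0.ne']
    have hbb : b ^ (α - 1) * b = b ^ α := rpow_pred_mul hα hb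
    have hba : b ^ (α - 1) * (b - a) = (1 - a / b) * b ^ α := by
      rw [← hbb]
      field_simp
    have hbαn : (0:ℝ) ≤ b ^ α := Real.rpow_nonneg hb α
    have hba0 : (0:ℝ) ≤ b - a := by linarith
    have hdn : 0 ≤ b ^ α - a ^ α := sub_nonneg.mpr (Real.rpow_le_rpow ha hab hα.le)
    rcases le_total 1 α with h1 | h1
    · -- α ≥ 1
      have hcore := core2 h1 ht0 ht1
      have step1 : b ^ (α - 1) * (b - a) ≤ b ^ α - a ^ α := by
        rw [haα, hba]
        nlinarith [hbαn, hcore]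
      have h2b : (a + b) ^ (α - 1) ≤ (2 * b) ^ (α - 1) :=
        Real.rpow_le_rpow (by linarith) (by linarith) (by linarith)
      have h2brw : (2 * b) ^ (α - 1) = 2 ^ (α - 1) * b ^ (α - 1) :=
        Real.mul_rpow (by norm_num) hb
      have habs : (2:ℝ) ^ (α - 1) = 2 ^ |α - 1| := by
        rw [abs_of_nonneg (by linarith)]
      have htpn : (0:ℝ) ≤ 2 ^ (α - 1) := Real.rpow_nonneg (by norm_num) _
      calc (a + b) ^ (α - 1) * (b - a) ≤ (2 ^ (α - 1) * b ^ (α - 1)) * (b - a) := by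
            rw [← h2brw]
            exact mul_le_mul_of_nonneg_right h2b hba0
        _ = 2 ^ (α - 1) * (b ^ (α - 1) * (b - a)) := by ring
        _ ≤ 2 ^ (α - 1) * (b ^ α - a ^ α) := mul_le_mul_of_nonneg_left step1 htpn
        _ ≤ cst α * (b ^ α - a ^ α) := by
            apply mul_le_mul_of_nonneg_right _ hdn
            rw [habs]
            exact tp_le_cst hα
    · -- α ≤ 1
      have hcore := core4 hα h1 ht0
      have step1 : α * (b ^ (α - 1) * (b - a)) ≤ b ^ α - a ^ α := by
        rw [haα, hba]
        nlinarith [hbαn, hcore]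
      have hE : (a + b) ^ (α - 1) ≤ b ^ (α - 1) :=
        Real.rpow_le_rpow_of_nonpos hb0 (by linarith) (by linarith)
      calc (a + b) ^ (α - 1) * (b - a) ≤ b ^ (α - 1) * (b - a) :=
            mul_le_mul_of_nonneg_right hE hba0
        _ = α⁻¹ * (α * (b ^ (α - 1) * (b - a))) := by
            field_simp
        _ ≤ α⁻¹ * (b ^ α - a ^ α) :=
            mul_le_mul_of_nonneg_left step1 (inv_nonneg.mpr hα.le)
        _ ≤ cst α * (b ^ α - a ^ α) :=
            mul_le_mul_of_nonneg_right (inv_alpha_le_cst hα) hdn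

lemma scalar_sum_upper (hα : 0 < α) {a b : ℝ} (ha : 0 ≤ a) (hab : a ≤ b) :
    (a + b) ^ α ≤ cst α * (a ^ α + b ^ α) := by
  have hb : 0 ≤ b := ha.trans hab
  have haαn : (0:ℝ) ≤ a ^ α := Real.rpow_nonneg ha α
  have hbαn : (0:ℝ) ≤ b ^ α := Real.rpow_nonneg hb α
  have htpn : (0:ℝ) ≤ 2 ^ α := Real.rpow_nonneg (by norm_num) _
  calc (a + b) ^ α ≤ (2 * b) ^ α :=
        Real.rpow_le_rpow (by linarith) (by linarith) hα.le
    _ = 2 ^ α * b ^ α := Real.mul_rpow (by norm_num) hb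
    _ ≤ 2 ^ α * (a ^ α + b ^ α) :=
        mul_le_mul_of_nonneg_left (by linarith) htpn
    _ ≤ cst α * (a ^ α + b ^ α) :=
        mul_le_mul_of_nonneg_right (two_rpow_le_cst hα) (by linarith)

lemma scalar_sum_lower (hα : 0 < α) {a b : ℝ} (ha : 0 ≤ a) (hab : a ≤ b) :
    a ^ α + b ^ α ≤ cst α * (a + b) ^ α := by
  have hb : 0 ≤ b := ha.trans hab
  have h1 : a ^ α ≤ b ^ α := Real.rpow_le_rpow ha hab hα.le
  have h2 : b ^ α ≤ (a + b) ^ α := Real.rpow_le_rpow hb (by linarith) hα.le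
  have hn : (0:ℝ) ≤ (a + b) ^ α := Real.rpow_nonneg (by linarith) α
  have h3 := two_le_cst hα
  nlinarith

/- Squared symmetric versions, assuming only `0 ≤ a`, `0 ≤ b`. -/

lemma sq_diff_upper (hα : 0 < α) {a b : ℝ} (ha : 0 ≤ a) (hb : 0 ≤ b) :
    (b ^ α - a ^ α) ^ 2 ≤ (cst α) ^ 2 * (((a + b) ^ (α - 1)) ^ 2 * (b - a) ^ 2) := by
  rcases le_total a b with hab | hab
  · have h := scalar_diff_upper hα ha hab
    have h0 : 0 ≤ b ^ α - a ^ α := sub_nonneg.mpr (Real.rpow_le_rpow ha hab hα.le)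
    have := pow_le_pow_left₀ h0 h 2
    calc (b ^ α - a ^ α) ^ 2 ≤ (cst α * ((a + b) ^ (α - 1) * (b - a))) ^ 2 := this
      _ = (cst α) ^ 2 * (((a + b) ^ (α - 1)) ^ 2 * (b - a) ^ 2) := by ring
  · have h := scalar_diff_upper hα hb hab
    have h0 : 0 ≤ a ^ α - b ^ α := sub_nonneg.mpr (Real.rpow_le_rpow hb hab hα.le)
    have h2 := pow_le_pow_left₀ h0 h 2
    calc (b ^ α - a ^ α) ^ 2 = (a ^ α - b ^ α) ^ 2 := by ring
      _ ≤ (cst α * ((b + a) ^ (α - 1) * (a - b))) ^ 2 := h2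
      _ = (cst α) ^ 2 * (((a + b) ^ (α - 1)) ^ 2 * (b - a) ^ 2) := by
          rw [add_comm b a]; ring

lemma sq_diff_lower (hα : 0 < α) {a b : ℝ} (ha : 0 ≤ a) (hb : 0 ≤ b) :
    ((a + b) ^ (α - 1)) ^ 2 * (b - a) ^ 2 ≤ (cst α) ^ 2 * (b ^ α - a ^ α) ^ 2 := by
  rcases le_total a b with hab | hab
  · have h := scalar_diff_lower hα ha hab
    have h0 : 0 ≤ (a + b) ^ (α - 1) * (b - a) :=
      mul_nonneg (Real.rpow_nonneg (by linarith) _) (by linarith)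
    have h2 := pow_le_pow_left₀ h0 h 2
    calc ((a + b) ^ (α - 1)) ^ 2 * (b - a) ^ 2
        = ((a + b) ^ (α - 1) * (b - a)) ^ 2 := by ring
      _ ≤ (cst α * (b ^ α - a ^ α)) ^ 2 := h2
      _ = (cst α) ^ 2 * (b ^ α - a ^ α) ^ 2 := by ring
  · have h := scalar_diff_lower hα hb hab
    have h0 : 0 ≤ (b + a) ^ (α - 1) * (a - b) :=
      mul_nonneg (Real.rpow_nonneg (by linarith) _) (by linarith)
    have h2 := pow_le_pow_left₀ h0 h 2
    calc ((a + b) ^ (α - 1)) ^ 2 * (b - a) ^ 2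
        = ((b + a) ^ (α - 1) * (a - b)) ^ 2 := by rw [add_comm a b]; ring
      _ ≤ (cst α * (a ^ α - b ^ α)) ^ 2 := h2
      _ = (cst α) ^ 2 * (b ^ α - a ^ α) ^ 2 := by ring

lemma sq_sum_upper (hα : 0 < α) {a b : ℝ} (ha : 0 ≤ a) (hb : 0 ≤ b) :
    ((a + b) ^ (α - 1)) ^ 2 * (a + b) ^ 2 ≤ (cst α) ^ 2 * (a ^ α + b ^ α) ^ 2 := by
  have hab : (0:ℝ) ≤ a + b := by linarith
  have hkey : (a + b) ^ (α - 1) * (a + b) = (a + b) ^ α := rpow_pred_mul hα hab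
  have hsum : (a + b) ^ α ≤ cst α * (a ^ α + b ^ α) := by
    rcases le_total a b with h | h
    · exact scalar_sum_upper hα ha h
    · rw [add_comm a b, add_comm (a ^ α)]
      exact scalar_sum_upper hα hb h
  have h0 : 0 ≤ (a + b) ^ α := Real.rpow_nonneg hab α
  have h2 := pow_le_pow_left₀ h0 hsum 2
  calc ((a + b) ^ (α - 1)) ^ 2 * (a + b) ^ 2
      = ((a + b) ^ (α - 1) * (a + b)) ^ 2 := by ring
    _ = ((a + b) ^ α) ^ 2 := by rw [hkey]
    _ ≤ (cst α * (a ^ α + b ^ α)) ^ 2 := h2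
    _ = (cst α) ^ 2 * (a ^ α + b ^ α) ^ 2 := by ring

lemma sq_sum_lower (hα : 0 < α) {a b : ℝ} (ha : 0 ≤ a) (hb : 0 ≤ b) :
    (a ^ α + b ^ α) ^ 2 ≤ (cst α) ^ 2 * (((a + b) ^ (α - 1)) ^ 2 * (a + b) ^ 2) := by
  have hab : (0:ℝ) ≤ a + b := by linarith
  have hkey : (a + b) ^ (α - 1) * (a + b) = (a + b) ^ α := rpow_pred_mul hα hab
  have hsum : a ^ α + b ^ α ≤ cst α * (a + b) ^ α := by
    rcases le_total a b with h | h
    · exact scalar_sum_lower hα ha h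
    · rw [add_comm a b, add_comm (a ^ α)]
      exact scalar_sum_lower hα hb h
  have h0 : 0 ≤ a ^ α + b ^ α := by
    have := Real.rpow_nonneg ha α
    have := Real.rpow_nonneg hb α
    linarith
  have h2 := pow_le_pow_left₀ h0 hsum 2
  calc (a ^ α + b ^ α) ^ 2 ≤ (cst α * (a + b) ^ α) ^ 2 := h2
    _ = (cst α) ^ 2 * (((a + b) ^ α) ^ 2) := by ring
    _ = (cst α) ^ 2 * (((a + b) ^ (α - 1)) ^ 2 * (a + b) ^ 2) := by
        rw [← hkey]; ring

/-- Interpolation for affine functions. -/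
lemma interp {P Q s m : ℝ} (hm : |s| ≤ m) (h1 : P + Q * m ≤ 0) (h2 : P - Q * m ≤ 0) :
    P + Q * s ≤ 0 := by
  rcases abs_le.mp hm with ⟨hs1, hs2⟩
  rcases le_total 0 Q with hq | hq
  · have : Q * s ≤ Q * m := mul_le_mul_of_nonneg_left hs2 hq
    linarith
  · have : Q * s ≤ Q * (-m) := mul_le_mul_of_nonpos_left (by linarith) hq
    linarith

end PowerAlphaAux

open PowerAlphaAux
open scoped RealInnerProductSpace

set_option maxHeartbeats 1000000 in
/-- For every `α > 0` there exists a constant `c(α) ≥ 1` such that for all `u, v ∈ ℝ^N`,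
`(1/c) |⟦v⟧^α − ⟦u⟧^α| ≤ (|u| + |v|)^{α−1} |v − u| ≤ c |⟦v⟧^α − ⟦u⟧^α|`. -/
theorem power_alpha_estimate (N : ℕ) (α : ℝ) (hα : 0 < α) :
    ∃ c : ℝ, 1 ≤ c ∧ ∀ u v : EuclideanSpace ℝ (Fin N),
      (1 / c) * ‖vpow α v - vpow α u‖ ≤ (‖u‖ + ‖v‖) ^ (α - 1) * ‖v - u‖ ∧
      (‖u‖ + ‖v‖) ^ (α - 1) * ‖v - u‖ ≤ c * ‖vpow α v - vpow α u‖ := by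
  refine ⟨cst α, one_le_cst hα, fun u v => ?_⟩
  have hc0 : 0 < cst α := cst_pos hα
  set a : ℝ := ‖u‖ with hadef
  set b : ℝ := ‖v‖ with hbdef
  have ha : 0 ≤ a := norm_nonneg u
  have hb : 0 ≤ b := norm_nonneg v
  set s : ℝ := ⟪u, v⟫ with hsdef
  have hs : |s| ≤ a * b := abs_real_inner_le_norm u v
  have hA : 0 ≤ a ^ (α - 1) := Real.rpow_nonneg ha _
  have hB : 0 ≤ b ^ (α - 1) := Real.rpow_nonneg hb _
  have hE : 0 ≤ (a + b) ^ (α - 1) := Real.rpow_nonneg (by linarith) _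
  have hn : 0 ≤ ‖v - u‖ := norm_nonneg _
  have hD : 0 ≤ ‖vpow α v - vpow α u‖ := norm_nonneg _
  have key : a ^ (α - 1) * b ^ (α - 1) * (a * b) = a ^ α * b ^ α := by
    rw [← rpow_pred_mul hα ha, ← rpow_pred_mul hα hb]; ring
  have key2 : (cst α) ^ 2 * (a ^ (α - 1) * b ^ (α - 1) * (a * b))
      = (cst α) ^ 2 * (a ^ α * b ^ α) := by rw [key]
  have hMexp : ‖v - u‖ ^ 2 = b ^ 2 - 2 * s + a ^ 2 := by
    rw [norm_sub_sq_real, real_inner_comm]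
  have hDexp : ‖vpow α v - vpow α u‖ ^ 2
      = (b ^ α) ^ 2 - 2 * (a ^ (α - 1) * b ^ (α - 1) * s) + (a ^ α) ^ 2 := by
    show ‖(‖v‖ ^ (α - 1) • v) - (‖u‖ ^ (α - 1) • u)‖ ^ 2 = _
    rw [norm_sub_sq_real, real_inner_smul_left, real_inner_smul_right, real_inner_comm,
      norm_smul, norm_smul, Real.norm_eq_abs, Real.norm_eq_abs,
      abs_of_nonneg hB, abs_of_nonneg hA,
      ← hadef, ← hbdef, rpow_pred_mul hα ha, rpow_pred_mul hα hb]
    ring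
  -- second inequality : (a+b)^(α-1) * ‖v-u‖ ≤ cst α * D
  have main2 : (a + b) ^ (α - 1) * ‖v - u‖ ≤ cst α * ‖vpow α v - vpow α u‖ := by
    have h1 : (((a + b) ^ (α - 1)) ^ 2 * (a ^ 2 + b ^ 2)
          - (cst α) ^ 2 * ((b ^ α) ^ 2 + (a ^ α) ^ 2))
        + (2 * (cst α) ^ 2 * (a ^ (α - 1) * b ^ (α - 1)) - 2 * ((a + b) ^ (α - 1)) ^ 2)
          * (a * b) ≤ 0 := by
      have hd := sq_diff_lower hα (α := α) ha hb
      linarith [hd, key, key2]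
    have h2 : (((a + b) ^ (α - 1)) ^ 2 * (a ^ 2 + b ^ 2)
          - (cst α) ^ 2 * ((b ^ α) ^ 2 + (a ^ α) ^ 2))
        - (2 * (cst α) ^ 2 * (a ^ (α - 1) * b ^ (α - 1)) - 2 * ((a + b) ^ (α - 1)) ^ 2)
          * (a * b) ≤ 0 := by
      have hd := sq_sum_upper hα (α := α) ha hb
      linarith [hd, key, key2]
    have h3 := interp hs h1 h2
    have hsq : ((a + b) ^ (α - 1) * ‖v - u‖) ^ 2
        ≤ (cst α * ‖vpow α v - vpow α u‖) ^ 2 := by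
      have e1 : ((a + b) ^ (α - 1) * ‖v - u‖) ^ 2
          = ((a + b) ^ (α - 1)) ^ 2 * (b ^ 2 - 2 * s + a ^ 2) := by
        rw [mul_pow, hMexp]
      have e2 : (cst α * ‖vpow α v - vpow α u‖) ^ 2
          = (cst α) ^ 2 * ((b ^ α) ^ 2 - 2 * (a ^ (α - 1) * b ^ (α - 1) * s) + (a ^ α) ^ 2) := by
        rw [mul_pow, hDexp]
      rw [e1, e2]
      linarith [h3]
    have h4 := Real.sqrt_le_sqrt hsq
    rwa [Real.sqrt_sq (mul_nonneg hE hn), Real.sqrt_sq (mul_nonneg hc0.le hD)] at h4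
  -- first inequality : D ≤ cst α * ((a+b)^(α-1) * ‖v-u‖)
  have main1 : ‖vpow α v - vpow α u‖ ≤ cst α * ((a + b) ^ (α - 1) * ‖v - u‖) := by
    have h1 : (((b ^ α) ^ 2 + (a ^ α) ^ 2)
          - (cst α) ^ 2 * (((a + b) ^ (α - 1)) ^ 2 * (a ^ 2 + b ^ 2)))
        + (2 * (cst α) ^ 2 * ((a + b) ^ (α - 1)) ^ 2 - 2 * (a ^ (α - 1) * b ^ (α - 1)))
          * (a * b) ≤ 0 := by
      have hd := sq_diff_upper hα (α := α) ha hb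
      linarith [hd, key, key2]
    have h2 : (((b ^ α) ^ 2 + (a ^ α) ^ 2)
          - (cst α) ^ 2 * (((a + b) ^ (α - 1)) ^ 2 * (a ^ 2 + b ^ 2)))
        - (2 * (cst α) ^ 2 * ((a + b) ^ (α - 1)) ^ 2 - 2 * (a ^ (α - 1) * b ^ (α - 1)))
          * (a * b) ≤ 0 := by
      have hd := sq_sum_lower hα (α := α) ha hb
      linarith [hd, key, key2]
    have h3 := interp hs h1 h2
    have hsq : ‖vpow α v - vpow α u‖ ^ 2
        ≤ (cst α * ((a + b) ^ (α - 1) * ‖v - u‖)) ^ 2 := by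
      have e2 : (cst α * ((a + b) ^ (α - 1) * ‖v - u‖)) ^ 2
          = (cst α) ^ 2 * (((a + b) ^ (α - 1)) ^ 2 * (b ^ 2 - 2 * s + a ^ 2)) := by
        rw [mul_pow, mul_pow, hMexp]
      rw [hDexp, e2]
      linarith [h3]
    have h4 := Real.sqrt_le_sqrt hsq
    rwa [Real.sqrt_sq hD, Real.sqrt_sq (mul_nonneg hc0.le (mul_nonneg hE hn))] at h4
  refine ⟨?_, main2⟩
  calc (1 / cst α) * ‖vpow α v - vpow α u‖
      ≤ (1 / cst α) * (cst α * ((a + b) ^ (α - 1) * ‖v - u‖)) := by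
        apply mul_le_mul_of_nonneg_left main1
        positivity
    _ = (a + b) ^ (α - 1) * ‖v - u‖ := by
        field_simp
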